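/- (Corollary: Noadd is L/(L−1)-competitive on L-increasing trees) Let L > 1 be a real number. For every MLAPD instance whose tree is L-increasing, i.e. c(v) ≥ L·c(par v) for every node v ≠ r, the cost of the schedule produced by the Noadd algorithm is at most L/(L−1) times the cost of every feasible schedule of the instance. -/

import Mathlib

open Classical

variable {V : Type} [Fintype V] [DecidableEq V] {Req : Type} [Fintype Req]

/-- The root path of `v`: the set of nodes of the form `par^[n] v`, i.e. `v` and its ancestors. -/
noncomputable def rootPath (par : V → V) (v : V) : Finset V :=
  Finset.univ.filter (fun u => ∃ n : ℕ, par^[n] v = u)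

/-- The level of a node: the cardinality of its root path (the root has level 1). -/
noncomputable def level (par : V → V) (v : V) : ℕ :=
  (rootPath par v).card

/-- The depth `D` of the instance: the maximum level over all nodes. -/
noncomputable def depth (par : V → V) : ℕ :=
  Finset.univ.sup (level par)

/-- A valid service tree: contains the root and is closed under the parent map. -/
def IsServiceTree (r : V) (par : V → V) (S : Finset V) : Prop :=
  r ∈ S ∧ ∀ u ∈ S, par u ∈ S

/-- A service `(S, t)` satisfies a request `ρ` if the node of `ρ` lies in `S`
and `t` lies in the time window `[arr ρ, dl ρ]`. -/
def SatisfiedBy (node : Req → V) (arr dl : Req → ℝ) (S : Finset V) (t : ℝ) (ρ : Req) : Prop :=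
  node ρ ∈ S ∧ arr ρ ≤ t ∧ t ≤ dl ρ

/-- The cost of a service subtree. -/
noncomputable def serviceCost (c : V → ℝ) (S : Finset V) : ℝ :=
  ∑ u ∈ S, c u

/-- The cost of a schedule: the sum of the costs of its services. -/
noncomputable def scheduleCost (c : V → ℝ) (sched : List (Finset V × ℝ)) : ℝ :=
  (sched.map fun s => serviceCost c s.1).sum

/-- A schedule is feasible if each of its members is a valid service and every
request is satisfied by some service of the schedule. -/
def Feasible (r : V) (par : V → V) (node : Req → V) (arr dl : Req → ℝ)
    (sched : List (Finset V × ℝ)) : Prop :=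
  (∀ s ∈ sched, IsServiceTree r par s.1) ∧
  ∀ ρ : Req, ∃ s ∈ sched, SatisfiedBy node arr dl s.1 s.2 ρ

/-- The list of all requests, sorted in increasing order of deadline. -/
noncomputable def sortedReqs (dl : Req → ℝ) : List Req :=
  (Finset.univ : Finset Req).toList.mergeSort (fun a b => decide (dl a ≤ dl b))

/-- The Noadd algorithm, processing requests in increasing deadline order:
when the deadline of a request `ρ` not satisfied by any earlier Noadd service is reached,
transmit the service `(P(v(ρ)), d(ρ))`. -/
noncomputable def noaddAux (par : V → V) (node : Req → V) (arr dl : Req → ℝ) :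
    List Req → List (Finset V × ℝ) → List (Finset V × ℝ)
  | [], acc => acc
  | ρ :: rest, acc =>
    if ∃ s ∈ acc, SatisfiedBy node arr dl s.1 s.2 ρ then
      noaddAux par node arr dl rest acc
    else
      noaddAux par node arr dl rest (acc ++ [(rootPath par (node ρ), dl ρ)])

/-- The schedule produced by the Noadd algorithm. -/
noncomputable def noadd (par : V → V) (node : Req → V) (arr dl : Req → ℝ) :
    List (Finset V × ℝ) :=
  noaddAux par node arr dl (sortedReqs dl) []


set_option linter.unusedSectionVars false
set_option linter.unusedVariables false
set_option maxHeartbeats 1000000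

lemma mem_rootPath_iff (par : V → V) {u v : V} : u ∈ rootPath par v ↔ ∃ n : ℕ, par^[n] v = u := by
  simp [rootPath]

lemma self_mem_rootPath (par : V → V) (v : V) : v ∈ rootPath par v :=
  (mem_rootPath_iff par).2 ⟨0, rfl⟩

lemma fixed_eq_root (par : V → V) {r : V} (hroot : par r = r) (hreach : ∀ v, ∃ n, par^[n] v = r)
    {v : V} {m : ℕ} (hm : 0 < m) (h : par^[m] v = v) : v = r := by
  obtain ⟨k, hk⟩ := hreach v
  have h1 : par^[m * k] v = v := by
    rw [Function.iterate_mul]; exact Function.iterate_fixed h k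
  have hk' : k ≤ m * k := Nat.le_mul_of_pos_left k hm
  rw [show m * k = (m * k - k) + k from (Nat.sub_add_cancel hk').symm,
    Function.iterate_add_apply, hk, Function.iterate_fixed hroot] at h1
  exact h1.symm

lemma not_mem_rootPath_parent (par : V → V) {r : V} (hroot : par r = r)
    (hreach : ∀ v, ∃ n, par^[n] v = r) {v : V} (hv : v ≠ r) : v ∉ rootPath par (par v) := by
  rw [mem_rootPath_iff]
  rintro ⟨n, hn⟩
  exact hv (fixed_eq_root par hroot hreach (Nat.succ_pos n)
    (by rw [Function.iterate_succ_apply]; exact hn))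

lemma rootPath_eq_insert (par : V → V) {r : V} (hroot : par r = r)
    (hreach : ∀ v, ∃ n, par^[n] v = r) {v : V} (hv : v ≠ r) :
    rootPath par v = insert v (rootPath par (par v)) := by
  ext u
  simp only [Finset.mem_insert, mem_rootPath_iff]
  constructor
  · rintro ⟨n, hn⟩
    cases n with
    | zero => exact Or.inl hn.symm
    | succ n => exact Or.inr ⟨n, by rw [← Function.iterate_succ_apply]; exact hn⟩
  · rintro (rfl | ⟨n, hn⟩)
    · exact ⟨0, rfl⟩
    · exact ⟨n + 1, by rw [Function.iterate_succ_apply]; exact hn⟩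

lemma rootPath_root (par : V → V) {r : V} (hroot : par r = r) : rootPath par r = {r} := by
  ext u
  simp only [mem_rootPath_iff, Finset.mem_singleton]
  constructor
  · rintro ⟨n, hn⟩; rw [Function.iterate_fixed hroot] at hn; exact hn.symm
  · rintro rfl; exact ⟨0, rfl⟩

lemma rootPath_cost_le (par : V → V) {r : V} (hroot : par r = r)
    (hreach : ∀ v, ∃ n, par^[n] v = r) (c : V → ℝ) (hc : ∀ v, 0 < c v)
    {L : ℝ} (hL : 1 < L) (hLinc : ∀ v, v ≠ r → L * c (par v) ≤ c v) (v : V) :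
    serviceCost c (rootPath par v) ≤ (L / (L - 1)) * c v := by
  have hL1 : (0:ℝ) < L - 1 := by linarith
  have key : ∀ n : ℕ, ∀ v : V, (rootPath par v).card ≤ n →
      serviceCost c (rootPath par v) ≤ (L / (L - 1)) * c v := by
    intro n
    induction n with
    | zero =>
      intro v hv
      have := Finset.card_pos.mpr ⟨v, self_mem_rootPath par v⟩
      omega
    | succ n ih =>
      intro v hv
      by_cases hvr : v = r
      · rw [hvr, rootPath_root par hroot]
        have h1 : (1:ℝ) ≤ L / (L - 1) := by rw [le_div_iff₀ hL1]; linarith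
        calc serviceCost c {r} = c r := by simp [serviceCost]
          _ = 1 * c r := (one_mul _).symm
          _ ≤ (L / (L - 1)) * c r := mul_le_mul_of_nonneg_right h1 (hc r).le
      · have hins := rootPath_eq_insert par hroot hreach hvr
        have hnm := not_mem_rootPath_parent par hroot hreach hvr
        have hcard : (rootPath par (par v)).card ≤ n := by
          have : (rootPath par v).card = (rootPath par (par v)).card + 1 := by
            rw [hins, Finset.card_insert_of_notMem hnm]
          omega
        have h1 := ih (par v) hcard
        have h2 : serviceCost c (rootPath par v) = c v + serviceCost c (rootPath par (par v)) := by
          rw [hins]; exact Finset.sum_insert hnm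
        have h4 : L / (L - 1) * c (par v) ≤ c v / (L - 1) := by
          rw [div_mul_eq_mul_div, div_le_div_iff₀ hL1 hL1]
          nlinarith [mul_le_mul_of_nonneg_right (hLinc v hvr) hL1.le]
        have hfin : c v + c v / (L - 1) = (L / (L - 1)) * c v := by
          field_simp; ring
        rw [h2]; linarith
  exact key (rootPath par v).card v le_rfl

lemma noaddAux_spec (par : V → V) (node : Req → V) (arr dl : Req → ℝ) :
    ∀ (l : List Req) (acc : List (Finset V × ℝ)),
    ∃ T : List Req, T.Sublist l ∧
      noaddAux par node arr dl l acc =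
        acc ++ T.map (fun ρ => (rootPath par (node ρ), dl ρ)) ∧
      (∀ b ∈ T, ∀ s ∈ acc, ¬ SatisfiedBy node arr dl s.1 s.2 b) ∧
      T.Pairwise (fun a b => ¬ SatisfiedBy node arr dl (rootPath par (node a)) (dl a) b) := by
  intro l
  induction l with
  | nil =>
    intro acc
    exact ⟨[], List.Sublist.refl _, by simp [noaddAux], by simp, List.Pairwise.nil⟩
  | cons ρ rest ih =>
    intro acc
    by_cases h : ∃ s ∈ acc, SatisfiedBy node arr dl s.1 s.2 ρ
    · obtain ⟨T, hsub, heq, hacc, hpw⟩ := ih acc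
      refine ⟨T, hsub.cons ρ, ?_, hacc, hpw⟩
      rw [noaddAux, if_pos h]; exact heq
    · obtain ⟨T, hsub, heq, hacc, hpw⟩ := ih (acc ++ [(rootPath par (node ρ), dl ρ)])
      refine ⟨ρ :: T, hsub.cons₂ ρ, ?_, ?_, ?_⟩
      · rw [noaddAux, if_neg h, heq]; simp
      · intro b hb s hs
        rcases List.mem_cons.mp hb with rfl | hb'
        · exact fun hsat => h ⟨s, hs, hsat⟩
        · exact hacc b hb' s (List.mem_append_left _ hs)
      · exact List.Pairwise.cons
          (fun b hb => hacc b hb (rootPath par (node ρ), dl ρ) (by simp)) hpw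

lemma list_sum_map_getD {α : Type*} (F : α → ℝ) (d : α) (l : List α) :
    (l.map F).sum = ∑ i ∈ Finset.range l.length, F (l.getD i d) := by
  induction l with
  | nil => simp
  | cons a l ih =>
    rw [List.map_cons, List.sum_cons, List.length_cons, Finset.sum_range_succ']
    simp only [List.getD_cons_succ, List.getD_cons_zero, ih]
    ring


/-- **Corollary**: Noadd is `L/(L-1)`-competitive on `L`-increasing trees. -/
theorem noadd_L_increasing_competitive
    (r : V) (par : V → V) (c : V → ℝ) (node : Req → V) (arr dl : Req → ℝ)
    (hroot : par r = r) (hreach : ∀ v : V, ∃ n : ℕ, par^[n] v = r)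
    (hc : ∀ v, 0 < c v) (harr : ∀ ρ, arr ρ ≤ dl ρ) (hdl : Function.Injective dl)
    (L : ℝ) (hL : 1 < L) (hLinc : ∀ v : V, v ≠ r → L * c (par v) ≤ c v)
    (OPT : List (Finset V × ℝ)) (hOPT : Feasible r par node arr dl OPT) :
    scheduleCost c (noadd par node arr dl) ≤ (L / (L - 1)) * scheduleCost c OPT := by
  obtain ⟨hOPTtree, hOPTsat⟩ := hOPT
  have hL1 : (0:ℝ) < L - 1 := by linarith
  have hLpos : (0:ℝ) ≤ L / (L - 1) := by positivity
  obtain ⟨T, hsub, heq, -, hpw⟩ := noaddAux_spec par node arr dl (sortedReqs dl) []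
  have hnodupAll : (sortedReqs dl).Nodup :=
    ((Finset.univ.toList.mergeSort_perm _).nodup_iff).mpr (Finset.nodup_toList _)
  have hTnd : T.Nodup := hnodupAll.sublist hsub
  have htrans : ∀ a b c : Req, decide (dl a ≤ dl b) = true → decide (dl b ≤ dl c) = true →
      decide (dl a ≤ dl c) = true := by
    intro a b c; simp only [decide_eq_true_eq]; exact le_trans
  have htotal : ∀ a b : Req, (decide (dl a ≤ dl b) || decide (dl b ≤ dl a)) = true := by
    intro a b; simp only [Bool.or_eq_true, decide_eq_true_eq]; exact le_total _ _
  have hsorted : (sortedReqs dl).Pairwise (fun a b => dl a ≤ dl b) :=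
    (List.pairwise_mergeSort htrans htotal Finset.univ.toList).imp (fun h => by simpa using h)
  have hTsort : T.Pairwise (fun a b => dl a ≤ dl b) := hsorted.sublist hsub
  -- rewrite the noadd cost as a Finset sum over T
  have hcost : scheduleCost c (noadd par node arr dl) =
      ∑ ρ ∈ T.toFinset, serviceCost c (rootPath par (node ρ)) := by
    rw [noadd, heq, List.sum_toFinset _ hTnd]
    simp only [scheduleCost, List.nil_append, List.map_map]
    rfl
  -- pick OPT services for each request
  have hpick : ∀ ρ : Req, ∃ i : ℕ, i < OPT.length ∧
      SatisfiedBy node arr dl (OPT.getD i (∅, 0)).1 (OPT.getD i (∅, 0)).2 ρ := by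
    intro ρ
    obtain ⟨s, hs, hsat'⟩ := hOPTsat ρ
    obtain ⟨i, hi, hieq⟩ := List.mem_iff_getElem.mp hs
    refine ⟨i, hi, ?_⟩
    rw [List.getD_eq_getElem _ _ hi, hieq]
    exact hsat'
  choose f hf hsat using hpick
  set g : Req → ℕ × V := fun ρ => (f ρ, node ρ) with hg
  -- injectivity of the charging map on T
  have hcomb : T.Pairwise (fun a b => g a ≠ g b) := by
    refine (hTsort.and hpw).imp ?_
    rintro a b ⟨hle, hnsat⟩ hgeq
    apply hnsat
    have h1 : node a = node b := congrArg Prod.snd hgeq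
    have h2 : f a = f b := congrArg Prod.fst hgeq
    have hb2 := (hsat b).2.1
    have ha2 := (hsat a).2.2
    rw [← h2] at hb2
    refine ⟨?_, by linarith, hle⟩
    rw [← h1]; exact self_mem_rootPath par (node a)
  have hne : ∀ ⦃a⦄, a ∈ T → ∀ ⦃b⦄, b ∈ T → a ≠ b → g a ≠ g b :=
    by
      have : Std.Symm (fun a b : Req => g a ≠ g b) := ⟨fun _ _ h => Ne.symm h⟩
      exact List.Pairwise.forall hcomb
  -- the charging bound
  have hcharge : ∑ ρ ∈ T.toFinset, c (node ρ) ≤ scheduleCost c OPT := by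
    have hinj : ∀ x ∈ T.toFinset, ∀ y ∈ T.toFinset, g x = g y → x = y := by
      intro x hx y hy hxy
      by_contra hne'
      exact hne (List.mem_toFinset.mp hx) (List.mem_toFinset.mp hy) hne' hxy
    have himg : ∑ ρ ∈ T.toFinset, c (node ρ) = ∑ p ∈ T.toFinset.image g, c p.2 := by
      rw [Finset.sum_image hinj]
    rw [himg]
    have hsub2 : T.toFinset.image g ⊆ (Finset.range OPT.length) ×ˢ Finset.univ := by
      intro p hp
      obtain ⟨ρ, hρ, rfl⟩ := Finset.mem_image.mp hp
      simp only [Finset.mem_product, Finset.mem_range, Finset.mem_univ, and_true]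
      exact hf ρ
    calc ∑ p ∈ T.toFinset.image g, c p.2
        = ∑ p ∈ T.toFinset.image g,
            (if p.2 ∈ (OPT.getD p.1 (∅, 0)).1 then c p.2 else 0) := by
          refine Finset.sum_congr rfl fun p hp => ?_
          obtain ⟨ρ, hρ, rfl⟩ := Finset.mem_image.mp hp
          rw [if_pos (hsat ρ).1]
      _ ≤ ∑ p ∈ (Finset.range OPT.length) ×ˢ Finset.univ,
            (if p.2 ∈ (OPT.getD p.1 (∅, 0)).1 then c p.2 else 0) := by
          refine Finset.sum_le_sum_of_subset_of_nonneg hsub2 fun p _ _ => ?_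
          split
          · exact (hc _).le
          · exact le_rfl
      _ = ∑ i ∈ Finset.range OPT.length, serviceCost c (OPT.getD i (∅, 0)).1 := by
          rw [Finset.sum_product]
          refine Finset.sum_congr rfl fun i _ => ?_
          show (∑ y : V, if y ∈ (OPT.getD i (∅, 0)).1 then c y else 0) = _
          rw [serviceCost, Finset.sum_ite_mem, Finset.univ_inter]
      _ = scheduleCost c OPT := by
          rw [scheduleCost, list_sum_map_getD (fun s => serviceCost c s.1) (∅, 0)]
  -- put everything together
  rw [hcost]
  calc ∑ ρ ∈ T.toFinset, serviceCost c (rootPath par (node ρ))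
      ≤ ∑ ρ ∈ T.toFinset, (L / (L - 1)) * c (node ρ) :=
        Finset.sum_le_sum fun ρ _ => rootPath_cost_le par hroot hreach c hc hL hLinc (node ρ)
    _ = (L / (L - 1)) * ∑ ρ ∈ T.toFinset, c (node ρ) := by rw [Finset.mul_sum]
    _ ≤ (L / (L - 1)) * scheduleCost c OPT := mul_le_mul_of_nonneg_left hcharge hLpos
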